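/- Lemma 2 (inductive step, preservation of the partition marginal): for every parameter i : Fin S, if the probability under μ that i belongs to the first component A equals k/S, and the probability under μ that i belongs to the second component B equals (k + c)/S, then the probability under the updated distribution ν that i belongs to the updated partition A' = insert i₊ (A.erase i₋) equals k/S. -/

import Mathlib

open Finset
open scoped ENNReal


/-- One Maximum Roaming update step as a (probability) kernel: given a pair
`(A, B)` of a task partition and a visited set, sample `im` uniformly from `A`
and `ip` uniformly from the complement `Bᶜ`, and form
`(insert ip (A.erase im), insert ip B)`.  (On degenerate pairs, where `A` or
`Bᶜ` is empty — which never happens on the support of the distributions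
considered — it acts as the identity.) -/
noncomputable def mrStep (S : ℕ) (AB : Finset (Fin S) × Finset (Fin S)) :
    PMF (Finset (Fin S) × Finset (Fin S)) :=
  if h : AB.1.Nonempty ∧ (AB.2ᶜ).Nonempty then
    (PMF.uniformOfFinset AB.1 h.1).bind fun im =>
      (PMF.uniformOfFinset AB.2ᶜ h.2).map fun ip =>
        (insert ip (AB.1.erase im), insert ip AB.2)
  else PMF.pure AB

lemma mrStep_prob (S k c : ℕ) (hk : 0 < k) (hkcS : k + c < S) (i : Fin S)
    (A B : Finset (Fin S)) (hsub : A ⊆ B)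
    (hc1 : A.card = k) (hc2 : B.card = k + c) :
    (mrStep S (A, B)).toOuterMeasure {p | i ∈ p.1} =
      (if i ∈ A then ((k - 1 : ℕ) : ℝ≥0∞) / k else 0)
      + (if i ∈ B then 0 else 1 / ((S - (k + c) : ℕ) : ℝ≥0∞)) := by
  have hA1 : A.Nonempty := Finset.card_pos.mp (by omega)
  have hBc : Bᶜ.card = S - (k + c) := by
    rw [Finset.card_compl, hc2]; simp
  have hBc1 : (Bᶜ : Finset (Fin S)).Nonempty := Finset.card_pos.mp (by rw [hBc]; omega)
  have hAsum : (∑ im : Fin S, (PMF.uniformOfFinset A hA1) im) = 1 := by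
    rw [← tsum_fintype (L := SummationFilter.unconditional _)]; exact (PMF.uniformOfFinset A hA1).tsum_coe
  have hBsum : (∑ x : Fin S, (PMF.uniformOfFinset Bᶜ hBc1) x) = 1 := by
    rw [← tsum_fintype (L := SummationFilter.unconditional _)]; exact (PMF.uniformOfFinset Bᶜ hBc1).tsum_coe
  rw [mrStep, dif_pos ⟨hA1, hBc1⟩, PMF.toOuterMeasure_bind_apply]
  simp only [PMF.toOuterMeasure_map_apply]
  have hpre : ∀ im : Fin S, ((fun ip => (insert ip (A.erase im), insert ip B)) ⁻¹'
      {p : Finset (Fin S) × Finset (Fin S) | i ∈ p.1}) =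
      ↑(if i ∈ A.erase im then (Finset.univ : Finset (Fin S)) else {i}) := by
    intro im; ext ip
    by_cases h : i ∈ A.erase im <;>
      simp [h, Finset.mem_insert, eq_comm, Set.mem_setOf_eq]
  simp only [hpre, PMF.toOuterMeasure_apply_finset]
  rw [tsum_fintype]
  have hin : ∀ im : Fin S,
      (∑ x ∈ (if i ∈ A.erase im then (Finset.univ : Finset (Fin S)) else {i}),
        (PMF.uniformOfFinset Bᶜ hBc1) x) =
      if i ∈ A.erase im then 1 else
        (if i ∈ B then 0 else (((S - (k + c) : ℕ) : ℝ≥0∞))⁻¹) := by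
    intro im
    by_cases h : i ∈ A.erase im
    · rw [if_pos h, if_pos h, hBsum]
    · rw [if_neg h, if_neg h, Finset.sum_singleton, PMF.uniformOfFinset_apply, hBc]
      by_cases hiB : i ∈ B <;> simp [hiB]
  simp only [hin]
  by_cases hiA : i ∈ A
  · have hiB : i ∈ B := hsub hiA
    rw [if_pos hiA]
    simp only [if_pos hiB, add_zero]
    have step : ∀ im : Fin S, (PMF.uniformOfFinset A hA1) im *
        (if i ∈ A.erase im then 1 else 0) =
        if im ∈ A.erase i then ((k : ℕ) : ℝ≥0∞)⁻¹ else 0 := by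
      intro im
      rw [PMF.uniformOfFinset_apply, hc1]
      by_cases h1 : im ∈ A <;> by_cases h2 : im = i <;>
        simp [h1, h2, Finset.mem_erase, hiA, Ne.symm, eq_comm]
    rw [Finset.sum_congr rfl (fun im _ => step im), Finset.sum_ite_mem,
      Finset.univ_inter, Finset.sum_const, Finset.card_erase_of_mem hiA, hc1,
      nsmul_eq_mul, div_eq_mul_inv]
  · rw [if_neg hiA, zero_add]
    have hnotin : ∀ im : Fin S, i ∉ A.erase im := fun im h =>
      hiA (Finset.mem_erase.mp h).2
    simp only [if_neg (hnotin _)]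
    by_cases hiB : i ∈ B
    · simp only [if_pos hiB, mul_zero, Finset.sum_const_zero]
    · simp only [if_neg hiB]
      rw [← Finset.sum_mul, hAsum, one_mul, one_div]

/-- Lemma 2 (inductive step, preservation of the partition marginal): if under
`μ` the probability that `i ∈ A` equals `k/S` and the probability that
`i ∈ B` equals `(k+c)/S`, then under the updated distribution
`ν = μ.bind (mrStep S)` the probability that `i` belongs to the updated
partition `A' = insert ip (A.erase im)` equals `k/S`. -/
theorem maximum_roaming_marginal_preserved
    (S k c : ℕ) (hk : 0 < k) (hkcS : k + c < S)
    (μ : PMF (Finset (Fin S) × Finset (Fin S)))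
    (hsupp : ∀ AB ∈ μ.support, AB.1 ⊆ AB.2 ∧ AB.1.card = k ∧ AB.2.card = k + c)
    (i : Fin S)
    (hA : μ.toOuterMeasure {p | i ∈ p.1} = (k : ENNReal) / (S : ENNReal))
    (hB : μ.toOuterMeasure {p | i ∈ p.2} = ((k + c : ℕ) : ENNReal) / (S : ENNReal)) :
    (μ.bind (mrStep S)).toOuterMeasure {p | i ∈ p.1} = (k : ENNReal) / (S : ENNReal) := by
  have hkne : ((k : ℕ) : ℝ≥0∞) ≠ 0 := Nat.cast_ne_zero.mpr (by omega)
  have hknt : ((k : ℕ) : ℝ≥0∞) ≠ ⊤ := ENNReal.natCast_ne_top _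
  have hSne : ((S : ℕ) : ℝ≥0∞) ≠ 0 := Nat.cast_ne_zero.mpr (by omega)
  have hSnt : ((S : ℕ) : ℝ≥0∞) ≠ ⊤ := ENNReal.natCast_ne_top _
  have hmne : ((S - (k + c) : ℕ) : ℝ≥0∞) ≠ 0 :=
    Nat.cast_ne_zero.mpr (Nat.sub_ne_zero_of_lt hkcS)
  have hmnt : ((S - (k + c) : ℕ) : ℝ≥0∞) ≠ ⊤ := ENNReal.natCast_ne_top _
  rw [PMF.toOuterMeasure_bind_apply]
  have hterm : ∀ AB : Finset (Fin S) × Finset (Fin S),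
      μ AB * (mrStep S AB).toOuterMeasure {p | i ∈ p.1} =
      μ AB * ((if i ∈ AB.1 then ((k - 1 : ℕ) : ℝ≥0∞) / k else 0)
        + (if i ∈ AB.2 then 0 else 1 / ((S - (k + c) : ℕ) : ℝ≥0∞))) := by
    intro AB
    by_cases h : μ AB = 0
    · rw [h, zero_mul, zero_mul]
    · obtain ⟨h1, h2, h3⟩ := hsupp AB ((PMF.mem_support_iff μ AB).mpr h)
      rw [show AB = (AB.1, AB.2) from rfl,
        mrStep_prob S k c hk hkcS i AB.1 AB.2 h1 h2 h3]
  rw [tsum_congr hterm]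
  simp only [mul_add]
  rw [ENNReal.tsum_add]
  have e1 : ∀ AB : Finset (Fin S) × Finset (Fin S),
      μ AB * (if i ∈ AB.1 then ((k - 1 : ℕ) : ℝ≥0∞) / k else 0)
      = (if AB ∈ {p : Finset (Fin S) × Finset (Fin S) | i ∈ p.1} then μ AB else 0)
        * (((k - 1 : ℕ) : ℝ≥0∞) / k) := by
    intro AB
    by_cases h : i ∈ AB.1 <;> simp [h, Set.mem_setOf_eq, mul_comm]
  have e2 : ∀ AB : Finset (Fin S) × Finset (Fin S),
      μ AB * (if i ∈ AB.2 then 0 else 1 / ((S - (k + c) : ℕ) : ℝ≥0∞))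
      = (if AB ∈ {p : Finset (Fin S) × Finset (Fin S) | i ∉ p.2} then μ AB else 0)
        * (1 / ((S - (k + c) : ℕ) : ℝ≥0∞)) := by
    intro AB
    by_cases h : i ∈ AB.2 <;> simp [h, Set.mem_setOf_eq, mul_comm]
  rw [tsum_congr e1, tsum_congr e2, ENNReal.tsum_mul_right, ENNReal.tsum_mul_right]
  have hμA : (∑' AB : Finset (Fin S) × Finset (Fin S),
      (if AB ∈ {p : Finset (Fin S) × Finset (Fin S) | i ∈ p.1} then μ AB else 0))
      = (k : ℝ≥0∞) / S := by
    rw [← hA, PMF.toOuterMeasure_apply]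
    exact tsum_congr fun AB => (Set.indicator_apply _ _ _).symm
  have hμB : (∑' AB : Finset (Fin S) × Finset (Fin S),
      (if AB ∈ {p : Finset (Fin S) × Finset (Fin S) | i ∈ p.2} then μ AB else 0))
      = ((k + c : ℕ) : ℝ≥0∞) / S := by
    rw [← hB, PMF.toOuterMeasure_apply]
    exact tsum_congr fun AB => (Set.indicator_apply _ _ _).symm
  have hμBc : (∑' AB : Finset (Fin S) × Finset (Fin S),
      (if AB ∈ {p : Finset (Fin S) × Finset (Fin S) | i ∉ p.2} then μ AB else 0))
      = ((S - (k + c) : ℕ) : ℝ≥0∞) / S := by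
    have hsplit : ∀ AB : Finset (Fin S) × Finset (Fin S), μ AB =
        (if AB ∈ {p : Finset (Fin S) × Finset (Fin S) | i ∈ p.2} then μ AB else 0)
        + (if AB ∈ {p : Finset (Fin S) × Finset (Fin S) | i ∉ p.2} then μ AB else 0) := by
      intro AB; by_cases h : i ∈ AB.2 <;> simp [h, Set.mem_setOf_eq]
    have htot : ((k + c : ℕ) : ℝ≥0∞) / S
        + (∑' AB : Finset (Fin S) × Finset (Fin S),
          (if AB ∈ {p : Finset (Fin S) × Finset (Fin S) | i ∉ p.2} then μ AB else 0)) = 1 := by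
      rw [← hμB, ← ENNReal.tsum_add, ← tsum_congr hsplit]
      exact μ.tsum_coe
    have hsum : ((k + c : ℕ) : ℝ≥0∞) / S + ((S - (k + c) : ℕ) : ℝ≥0∞) / S = 1 := by
      rw [ENNReal.div_add_div_same, ← Nat.cast_add,
        show k + c + (S - (k + c)) = S by omega, ENNReal.div_self hSne hSnt]
    have hfin : ((k + c : ℕ) : ℝ≥0∞) / S ≠ ⊤ :=
      (ENNReal.div_lt_top (ENNReal.natCast_ne_top _) hSne).ne
    exact (ENNReal.add_right_inj hfin).mp (htot.trans hsum.symm)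
  rw [hμA, hμBc]
  have f1 : ((k - 1 : ℕ) : ℝ≥0∞) / k * ((k : ℝ≥0∞) / S) = ((k - 1 : ℕ) : ℝ≥0∞) / S := by
    rw [div_eq_mul_inv, div_eq_mul_inv, ← mul_assoc, mul_assoc (((k - 1 : ℕ) : ℝ≥0∞)),
      ENNReal.inv_mul_cancel hkne hknt, mul_one, ← div_eq_mul_inv]
  have f2 : 1 / ((S - (k + c) : ℕ) : ℝ≥0∞) * (((S - (k + c) : ℕ) : ℝ≥0∞) / S)
      = 1 / (S : ℝ≥0∞) := by
    rw [div_eq_mul_inv, div_eq_mul_inv, ← mul_assoc, mul_assoc (1 : ℝ≥0∞),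
      ENNReal.inv_mul_cancel hmne hmnt, mul_one, ← div_eq_mul_inv]
  rw [mul_comm ((k : ℝ≥0∞) / S), mul_comm (((S - (k + c) : ℕ) : ℝ≥0∞) / S), f1, f2,
    ENNReal.div_add_div_same]
  congr 1
  exact_mod_cast (by omega : k - 1 + 1 = k)
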